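/- Under the NIN existence conditions e_1 > ... > e_n, r_1 > ... > r_n, Q_n < r_n, there exists a unique equilibrium E† of the nested infection network system with all components positive except P_n = 0; it is given by H_j† = H_j* for j < n, H_n† = H_n* + P_n*/a_n, P_j† = P_j* for j < n, P_n† = 0, where (H*, P*) is the positive equilibrium. -/
import Mathlib


open Filter Finset

/-- `H*` components of the nested-infection-network positive equilibrium. -/
noncomputable def HstarNIN (e : ℕ → ℝ) : ℕ → ℝ
  | 0 => 1 / e 0
  | (j + 1) => 1 / e (j + 1) - 1 / e j

/-- `Q_n = Σ_j a_j H_j*`. -/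
noncomputable def QNIN (n : ℕ) (a e : ℕ → ℝ) : ℝ :=
  ∑ j ∈ Finset.range n, a j * HstarNIN e j

/-- `P*` components: `P_j* = r_j − r_{j+1}` for `j < n−1`, `P_{n-1}* = r_{n-1} − Q_n`
(0-based indexing). -/
noncomputable def PstarNIN (n : ℕ) (r a e : ℕ → ℝ) (j : ℕ) : ℝ :=
  if j = n - 1 then r j - QNIN n a e else r j - r (j + 1)

/-- `(h, p)` is an equilibrium of the NIN system
`H_i' = H_i(r_i − Σ_j a_j H_j − Σ_{j ≥ i} P_j)`, `P_i' = e_i n_i P_i(Σ_{j ≤ i} H_j − 1/e_i)`. -/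
def isEqNIN (n : ℕ) (r a e ν : ℕ → ℝ) (h p : ℕ → ℝ) : Prop :=
  (∀ i < n, h i * (r i - (∑ j ∈ Finset.range n, a j * h j) - ∑ j ∈ Finset.Ico i n, p j) = 0) ∧
  (∀ i < n, e i * ν i * p i * ((∑ j ∈ Finset.range (i + 1), h j) - 1 / e i) = 0)


/-- `H†` components: `H_j† = H_j*` for `j < n−1`, `H_{n-1}† = H_{n-1}* + P_{n-1}*/a_{n-1}`. -/
noncomputable def HdagNIN (n : ℕ) (r a e : ℕ → ℝ) (j : ℕ) : ℝ :=
  if j = n - 1 then HstarNIN e j + PstarNIN n r a e j / a j else HstarNIN e j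

/-- `P†` components: `P_j† = P_j*` for `j < n−1`, `P_{n-1}† = 0`. -/
noncomputable def PdagNIN (n : ℕ) (r a e : ℕ → ℝ) (j : ℕ) : ℝ :=
  if j = n - 1 then 0 else PstarNIN n r a e j


lemma hstar_succ (e : ℕ → ℝ) (j : ℕ) : HstarNIN e (j + 1) = 1 / e (j + 1) - 1 / e j := rfl

lemma sum_hstar (e : ℕ → ℝ) (i : ℕ) :
    ∑ j ∈ Finset.range (i + 1), HstarNIN e j = 1 / e i := by
  induction i with
  | zero => simp [HstarNIN]
  | succ k ih => rw [Finset.sum_range_succ, ih, hstar_succ]; ring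

lemma hstar_pos (n : ℕ) (e : ℕ → ℝ) (he : ∀ i < n, 0 < e i)
    (heord : ∀ i, i + 1 < n → e (i + 1) < e i) :
    ∀ i < n, 0 < HstarNIN e i := by
  intro i hi
  cases i with
  | zero => exact one_div_pos.mpr (he 0 hi)
  | succ k =>
      rw [hstar_succ]
      have h1 : 0 < e (k + 1) := he _ hi
      have h2 : e (k + 1) < e k := heord k hi
      have := one_div_lt_one_div_of_lt h1 h2
      linarith

lemma sum_pdag (n : ℕ) (hn : 0 < n) (r a e : ℕ → ℝ) :
    ∀ k i, i + k = n - 1 → ∑ j ∈ Finset.Ico i n, PdagNIN n r a e j = r i - r (n - 1) := by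
  intro k
  induction k with
  | zero =>
      intro i hi
      simp only [Nat.add_zero] at hi
      subst hi
      have hIco : Finset.Ico (n - 1) n = {n - 1} := by ext x; simp; omega
      rw [hIco, Finset.sum_singleton, PdagNIN, if_pos rfl, sub_self]
  | succ k ih =>
      intro i hi
      have h1 : i < n := by omega
      rw [Finset.sum_eq_sum_Ico_succ_bot h1, ih (i + 1) (by omega)]
      have h2 : PdagNIN n r a e i = r i - r (i + 1) := by
        rw [PdagNIN, if_neg (by omega), PstarNIN, if_neg (by omega)]
      rw [h2]; ring

lemma sum_aHdag (n : ℕ) (hn : 0 < n) (r a e : ℕ → ℝ) (ham : a (n - 1) ≠ 0) :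
    ∑ j ∈ Finset.range n, a j * HdagNIN n r a e j = r (n - 1) := by
  obtain ⟨m, rfl⟩ : ∃ m, n = m + 1 := ⟨n - 1, by omega⟩
  have hm : m + 1 - 1 = m := rfl
  rw [Finset.sum_range_succ]
  have h1 : ∀ j ∈ Finset.range m, a j * HdagNIN (m + 1) r a e j = a j * HstarNIN e j := by
    intro j hj
    rw [HdagNIN, if_neg (by simp only [hm]; exact Nat.ne_of_lt (Finset.mem_range.mp hj))]
  rw [Finset.sum_congr rfl h1]
  have hd : HdagNIN (m + 1) r a e m = HstarNIN e m + (r m - QNIN (m + 1) a e) / a m := by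
    rw [HdagNIN, PstarNIN]; simp
  have hQ : QNIN (m + 1) a e = (∑ j ∈ Finset.range m, a j * HstarNIN e j) + a m * HstarNIN e m := by
    rw [QNIN, Finset.sum_range_succ]
  have ham' : a m ≠ 0 := ham
  rw [hd, hQ, hm]
  field_simp
  ring

/-- under the NIN existence conditions there is a unique equilibrium `E†`
with all components positive except `P_n = 0`, given by the explicit formulas. -/
theorem statement3
    (n : ℕ) (hn : 0 < n) (r a e ν : ℕ → ℝ)
    (hr : ∀ i < n, 0 < r i) (ha : ∀ i < n, 0 < a i)
    (he : ∀ i < n, 0 < e i) (hν : ∀ i < n, 0 < ν i)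
    (heord : ∀ i, i + 1 < n → e (i + 1) < e i)
    (hrord : ∀ i, i + 1 < n → r (i + 1) < r i)
    (hQ : QNIN n a e < r (n - 1)) :
    ((∀ i < n, 0 < HdagNIN n r a e i) ∧ (∀ i, i + 1 < n → 0 < PdagNIN n r a e i) ∧
      PdagNIN n r a e (n - 1) = 0 ∧ isEqNIN n r a e ν (HdagNIN n r a e) (PdagNIN n r a e)) ∧
    (∀ h p : ℕ → ℝ, (∀ i < n, 0 < h i) → (∀ i, i + 1 < n → 0 < p i) → p (n - 1) = 0 →
      isEqNIN n r a e ν h p →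
      ∀ i < n, h i = HdagNIN n r a e i ∧ p i = PdagNIN n r a e i) := by
  have ham : a (n - 1) ≠ 0 := ne_of_gt (ha _ (by omega))
  have hSdag := sum_aHdag n hn r a e ham
  have hHdag_pos : ∀ i < n, 0 < HdagNIN n r a e i := by
    intro i hi
    by_cases hcase : i = n - 1
    · subst hcase
      rw [HdagNIN, if_pos rfl, PstarNIN, if_pos rfl]
      have h1 : 0 < HstarNIN e (n - 1) := hstar_pos n e he heord _ (by omega)
      have h2 : 0 < (r (n - 1) - QNIN n a e) / a (n - 1) :=
        div_pos (by linarith) (ha _ (by omega))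
      linarith
    · rw [HdagNIN, if_neg hcase]
      exact hstar_pos n e he heord i hi
  have hPdag_pos : ∀ i, i + 1 < n → 0 < PdagNIN n r a e i := by
    intro i hi
    rw [PdagNIN, if_neg (by omega), PstarNIN, if_neg (by omega)]
    have := hrord i hi
    linarith
  have hPdag_last : PdagNIN n r a e (n - 1) = 0 := by rw [PdagNIN, if_pos rfl]
  refine ⟨⟨hHdag_pos, hPdag_pos, hPdag_last, ?_, ?_⟩, ?_⟩
  · -- H equations for Hdag, Pdag
    intro i hi
    rw [hSdag, sum_pdag n hn r a e (n - 1 - i) i (by omega)]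
    ring
  · -- P equations for Hdag, Pdag
    intro i hi
    by_cases hcase : i = n - 1
    · subst hcase
      rw [hPdag_last]; ring
    · have h1 : ∑ j ∈ Finset.range (i + 1), HdagNIN n r a e j
          = ∑ j ∈ Finset.range (i + 1), HstarNIN e j := by
        refine Finset.sum_congr rfl fun j hj => ?_
        have : j < i + 1 := Finset.mem_range.mp hj
        rw [HdagNIN, if_neg (by omega)]
      rw [h1, sum_hstar, sub_self, mul_zero]
  · -- uniqueness
    intro h p hh hp hplast ⟨heq1, heq2⟩
    -- the H-bracket vanishes
    have hbr : ∀ i < n, r i - (∑ j ∈ Finset.range n, a j * h j) - ∑ j ∈ Finset.Ico i n, p j = 0 := by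
      intro i hi
      have := heq1 i hi
      rcases mul_eq_zero.mp this with h0 | h0
      · exact absurd h0 (ne_of_gt (hh i hi))
      · exact h0
    -- the P-bracket vanishes for i < n - 1
    have hpbr : ∀ i, i + 1 < n → ∑ j ∈ Finset.range (i + 1), h j = 1 / e i := by
      intro i hi
      have := heq2 i (by omega)
      have hne : e i * ν i * p i ≠ 0 := by
        have := he i (by omega); have := hν i (by omega); have := hp i hi
        positivity
      have h0 : (∑ j ∈ Finset.range (i + 1), h j) - 1 / e i = 0 := by
        rcases mul_eq_zero.mp this with h0 | h0
        · exact absurd h0 hne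
        · exact h0
      linarith [h0]
    -- h agrees with Hstar below n - 1
    have hhstar : ∀ j, j + 1 < n → h j = HstarNIN e j := by
      intro j hj
      cases j with
      | zero =>
          have := hpbr 0 hj
          rw [Finset.sum_range_one] at this
          rw [this]; rfl
      | succ k =>
          have h1 := hpbr (k + 1) hj
          have h2 := hpbr k (by omega)
          rw [Finset.sum_range_succ, h2] at h1
          rw [hstar_succ]; linarith
    -- p agrees with Pdag below n - 1
    have hpval : ∀ i, i + 1 < n → p i = r i - r (i + 1) := by
      intro i hi
      have h1 := hbr i (by omega)
      have h2 := hbr (i + 1) hi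
      rw [Finset.sum_eq_sum_Ico_succ_bot (by omega : i < n)] at h1
      linarith
    -- the total sum S equals r (n-1)
    have hS : ∑ j ∈ Finset.range n, a j * h j = r (n - 1) := by
      have h1 := hbr (n - 1) (by omega)
      have h2 : ∑ j ∈ Finset.Ico (n - 1) n, p j = 0 := by
        have hIco : Finset.Ico (n - 1) n = {n - 1} := by ext x; simp; omega
        rw [hIco, Finset.sum_singleton]
        exact hplast
      rw [h2] at h1
      linarith
    -- hence h (n-1) = Hdag (n-1)
    have hhlast : h (n - 1) = HdagNIN n r a e (n - 1) := by
      have key : ∑ j ∈ Finset.range n, a j * h j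
          = ∑ j ∈ Finset.range n, a j * HdagNIN n r a e j := by rw [hS, hSdag]
      have hrange : Finset.range n = Finset.range (n - 1 + 1) := by
        rw [Nat.sub_add_cancel hn]
      rw [hrange, Finset.sum_range_succ, Finset.sum_range_succ] at key
      have hcong : ∀ j ∈ Finset.range (n - 1), a j * h j = a j * HdagNIN n r a e j := by
        intro j hj
        have hjlt : j < n - 1 := Finset.mem_range.mp hj
        rw [hhstar j (by omega), HdagNIN, if_neg (by omega)]
      rw [Finset.sum_congr rfl hcong] at key
      have key2 : a (n - 1) * h (n - 1) = a (n - 1) * HdagNIN n r a e (n - 1) := by linarith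
      exact mul_left_cancel₀ ham key2
    intro i hi
    by_cases hcase : i = n - 1
    · subst hcase
      exact ⟨hhlast, by rw [hplast, hPdag_last]⟩
    · refine ⟨?_, ?_⟩
      · rw [hhstar i (by omega), HdagNIN, if_neg hcase]
      · rw [hpval i (by omega), PdagNIN, if_neg hcase, PstarNIN, if_neg hcase]
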